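/- arXiv:1907.04842 — 3 statements merged into one kernel-verified Lean document; each statement's English description precedes it below -/
import Mathlib

section
/- Suppose P({ξ ∈ Ω : ξ is strictly increasing}) > 1 − δ for some 0 ≤ δ < α ≤ 1/2. Then for every l in Fin L, the event {ξ ∈ Ω : ξ is strictly increasing} is contained in the local statement A(l,α), hence P(A(l,α)) > 1 − δ for every l; moreover, the intersection over all l of the local statements equals the ordering event: ⋂_{l ∈ Fin L} A(l,α) = {ξ ∈ Ω : ξ is strictly increasing}. -/
open MeasureTheory Set

/-- Elementary statement: parameter `l` is ordered higher than `l'`. -/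
def Elem (L : ℕ) (l l' : Fin L) : Set (Fin L → ℝ) := {ξ | ξ l' < ξ l}

/-- Indices ordered lower than `l` with posterior probability at least `1 - α`. -/
def underA {L : ℕ} (P : Measure (Fin L → ℝ)) (α : ℝ) (l : Fin L) : Set (Fin L) :=
  {l' | (P (Elem L l l')).toReal > 1 - α}

/-- Indices ordered higher than `l` with posterior probability at least `1 - α`. -/
def overA {L : ℕ} (P : Measure (Fin L → ℝ)) (α : ℝ) (l : Fin L) : Set (Fin L) :=
  {l' | (P (Elem L l' l)).toReal > 1 - α}

/-- Local statement `A(l, α)`. -/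
def locA {L : ℕ} (P : Measure (Fin L → ℝ)) (α : ℝ) (l : Fin L) : Set (Fin L → ℝ) :=
  (⋂ l' ∈ underA P α l, Elem L l l') ∩ (⋂ l' ∈ overA P α l, Elem L l' l)

/-- Local statement with local error `t`, `A(l, α, t)`. -/
def locAt {L : ℕ} (P : Measure (Fin L → ℝ)) (α t : ℝ) (l : Fin L) : Set (Fin L → ℝ) :=
  ⋃ (u : Set (Fin L)) (v : Set (Fin L)) (_ : u ⊆ underA P α l) (_ : v ⊆ overA P α l)
    (_ : (1 - t) * ((underA P α l ∪ overA P α l).ncard : ℝ) ≤ (u.ncard : ℝ) + (v.ncard : ℝ)),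
    (⋂ l' ∈ u, Elem L l l') ∩ (⋂ l' ∈ v, Elem L l' l)

/-- Indices whose local statements have posterior probability at least `1 - γ`. -/
def GsetI {L : ℕ} (P : Measure (Fin L → ℝ)) (α t γ : ℝ) : Set (Fin L) :=
  {l | (P (locAt P α t l)).toReal ≥ 1 - γ}

/-- Global statement `G(α, t, γ)`. -/
def globG {L : ℕ} (P : Measure (Fin L → ℝ)) (α t γ : ℝ) : Set (Fin L → ℝ) :=
  ⋂ l ∈ GsetI P α t γ, locAt P α t l

/-- Global statement with global error `q`, `G(α, t, γ, q)`. -/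
def globGq {L : ℕ} (P : Measure (Fin L → ℝ)) (α t γ q : ℝ) : Set (Fin L → ℝ) :=
  ⋃ (G : Set (Fin L)) (_ : G ⊆ GsetI P α t γ)
    (_ : (1 - q) * ((GsetI P α t γ).ncard : ℝ) ≤ (G.ncard : ℝ)),
    ⋂ l ∈ G, locAt P α t l

theorem stmt_15 (L : ℕ) (hL : 1 ≤ L) (P : Measure (Fin L → ℝ)) [IsProbabilityMeasure P]
    (δ α : ℝ) (hδ0 : 0 ≤ δ) (hδα : δ < α) (hα : α ≤ 1 / 2)
    (hconc : (P {ξ : Fin L → ℝ | StrictMono ξ}).toReal > 1 - δ) :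
    (∀ l : Fin L, {ξ : Fin L → ℝ | StrictMono ξ} ⊆ locA P α l) ∧
    (∀ l : Fin L, (P (locA P α l)).toReal > 1 - δ) ∧
    (⋂ l : Fin L, locA P α l) = {ξ : Fin L → ℝ | StrictMono ξ} := by

  have hmeasE : ∀ l l' : Fin L, MeasurableSet (Elem L l l') := fun l l' =>
    measurableSet_lt (measurable_pi_apply l') (measurable_pi_apply l)
  set S : Set (Fin L → ℝ) := {ξ : Fin L → ℝ | StrictMono ξ} with hSdef
  have hmono : ∀ s t : Set (Fin L → ℝ), s ⊆ t → (P s).toReal ≤ (P t).toReal := by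
    intro s t hst
    exact ENNReal.toReal_mono (measure_ne_top P t) (measure_mono hst)
  have hsmall : ∀ l l' : Fin L, l < l' → (P (Elem L l l')).toReal < α := by
    intro l l' hlt
    have hsub : S ⊆ (Elem L l l')ᶜ := by
      intro ξ hξ h
      exact absurd h (not_lt.2 (le_of_lt (hξ hlt)))
    have hcompl : (P (Elem L l l')ᶜ).toReal = 1 - (P (Elem L l l')).toReal := by
      rw [measure_compl (hmeasE l l') (measure_ne_top P _), measure_univ,
        ENNReal.toReal_sub_of_le prob_le_one ENNReal.one_ne_top, ENNReal.toReal_one]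
    have := hmono _ _ hsub
    rw [hcompl] at this
    linarith
  have hempty : ∀ l : Fin L, (P (Elem L l l)).toReal = 0 := by
    intro l
    have : Elem L l l = ∅ := by
      ext ξ; simp [_root_.Elem]
    simp [this]
  have hunder : ∀ l l' : Fin L, l' ∈ underA P α l → l' < l := by
    intro l l' h
    by_contra hle
    push_neg at hle
    rcases eq_or_lt_of_le hle with heq | hlt
    · rw [← heq] at h
      have := hempty l
      have h' : (P (Elem L l l)).toReal > 1 - α := h
      linarith
    · have := hsmall l l' hlt
      have h' : (P (Elem L l l')).toReal > 1 - α := h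
      linarith
  have hover : ∀ l l' : Fin L, l' ∈ overA P α l → l < l' := by
    intro l l' h
    by_contra hle
    push_neg at hle
    rcases eq_or_lt_of_le hle with heq | hlt
    · rw [heq] at h
      have := hempty l
      have h' : (P (Elem L l l)).toReal > 1 - α := h
      linarith
    · have := hsmall l' l hlt
      have h' : (P (Elem L l' l)).toReal > 1 - α := h
      linarith
  have hpart1 : ∀ l : Fin L, S ⊆ locA P α l := by
    intro l ξ hξ
    constructor
    · exact mem_iInter₂.2 fun l' hl' => hξ (hunder l l' hl')
    · exact mem_iInter₂.2 fun l' hl' => hξ (hover l l' hl')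
  refine ⟨hpart1, fun l => lt_of_lt_of_le hconc (hmono _ _ (hpart1 l)), ?_⟩
  apply Subset.antisymm
  · intro ξ hξ a b hab
    have hsubE : S ⊆ Elem L b a := fun ζ hζ => hζ hab
    have hmem : a ∈ underA P α b := by
      have : (P (Elem L b a)).toReal ≥ (P S).toReal := hmono _ _ hsubE
      show (P (Elem L b a)).toReal > 1 - α
      linarith
    have hloc : ξ ∈ locA P α b := mem_iInter.1 hξ b
    exact mem_iInter₂.1 hloc.1 a hmem
  · intro ξ hξ
    exact mem_iInter.2 fun l => hpart1 l hξ
end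

section
/- Suppose P({ξ ∈ Ω : ξ is strictly increasing}) > 1 − δ, where 0 ≤ δ < α ≤ 1/2 and δ < γ ≤ 1. Then 𝒢(α,0,γ) consists of all of Fin L, the global statement G(α,0,γ) equals the ordering event {ξ ∈ Ω : ξ is strictly increasing}, and P(G(α,0,γ)) > 1 − δ. (That is, when the posterior concentrates on a strict ordering, the optimal global statement with zero local and global errors asserts exactly that ordering.) -/
open MeasureTheory Set

theorem stmt_16 (L : ℕ) (hL : 1 ≤ L) (P : Measure (Fin L → ℝ)) [IsProbabilityMeasure P]
    (δ α γ : ℝ) (hδ0 : 0 ≤ δ) (hδα : δ < α) (hα : α ≤ 1 / 2) (hδγ : δ < γ) (hγ1 : γ ≤ 1)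
    (hconc : (P {ξ : Fin L → ℝ | StrictMono ξ}).toReal > 1 - δ) :
    GsetI P α 0 γ = Set.univ ∧
    globG P α 0 γ = {ξ : Fin L → ℝ | StrictMono ξ} ∧
    (P (globG P α 0 γ)).toReal > 1 - δ := by
  
  have hmeas : ∀ l l' : Fin L, MeasurableSet (Elem L l l') := fun l l' =>
    measurableSet_lt (measurable_pi_apply l') (measurable_pi_apply l)
  have hfin : ∀ S : Set (Fin L → ℝ), P S ≠ ⊤ := fun S => measure_ne_top P S
  have hSM : ∀ l l' : Fin L, l' < l → {ξ : Fin L → ℝ | StrictMono ξ} ⊆ Elem L l l' := by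
    intro l l' h ξ hξ; exact hξ h
  have hP : ∀ l l' : Fin L, l' < l → (P (Elem L l l')).toReal > 1 - δ := by
    intro l l' h
    calc 1 - δ < (P {ξ : Fin L → ℝ | StrictMono ξ}).toReal := hconc
    _ ≤ (P (Elem L l l')).toReal := ENNReal.toReal_mono (hfin _) (measure_mono (hSM l l' h))
  have hunder : ∀ l : Fin L, underA P α l = {l' | l' < l} := by
    intro l
    ext l'
    simp only [underA, Set.mem_setOf_eq]
    constructor
    · intro h
      by_contra hc
      push_neg at hc
      rcases lt_or_eq_of_le hc with h1 | h1
      · have h2 := hP l' l h1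
        have hd : Disjoint (_root_.Elem L l l') (_root_.Elem L l' l) := by
          rw [Set.disjoint_left]; intro ξ ha hb
          simp only [_root_.Elem, Set.mem_setOf_eq] at ha hb
          exact absurd (lt_trans ha hb) (lt_irrefl _)
        have hU := measure_union (μ := P) hd (hmeas l' l)
        have hle : P (Elem L l l') + P (Elem L l' l) ≤ 1 := by
          rw [← hU]; exact prob_le_one
        have hle' : (P (Elem L l l')).toReal + (P (Elem L l' l)).toReal ≤ 1 := by
          rw [← ENNReal.toReal_add (hfin _) (hfin _)]
          have := ENNReal.toReal_mono ENNReal.one_ne_top hle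
          simpa using this
        linarith
      · subst h1
        have : _root_.Elem L l l = (∅ : Set (Fin L → ℝ)) := by
          ext ξ; simp [_root_.Elem]
        rw [this] at h
        simp at h
        linarith
    · intro h
      have := hP l l' h
      linarith
  have hover : ∀ l : Fin L, overA P α l = {l' | l < l'} := by
    intro l
    ext l'
    have : l' ∈ overA P α l ↔ l ∈ underA P α l' := Iff.rfl
    rw [Set.mem_setOf_eq, this, hunder l']
    exact Iff.rfl
  -- characterize locAt
  have hdisj : ∀ l : Fin L, Disjoint (underA P α l) (overA P α l) := by
    intro l
    rw [hunder, hover, Set.disjoint_left]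
    intro x hx hx'
    exact absurd (lt_trans hx' hx) (lt_irrefl l)
  have hloc : ∀ l : Fin L, locAt P α 0 l = locA P α l := by
    intro l
    apply Set.Subset.antisymm
    · intro ξ hξ
      simp only [locAt, Set.mem_iUnion] at hξ
      obtain ⟨u, v, hu, hv, hcard, hξ⟩ := hξ
      have hcu : u.ncard ≤ (underA P α l).ncard := Set.ncard_le_ncard hu (Set.toFinite _)
      have hcv : v.ncard ≤ (overA P α l).ncard := Set.ncard_le_ncard hv (Set.toFinite _)
      have hun : (underA P α l ∪ overA P α l).ncard
          = (underA P α l).ncard + (overA P α l).ncard :=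
        Set.ncard_union_eq (hdisj l) (Set.toFinite _) (Set.toFinite _)
      rw [hun] at hcard
      have hcu' : (underA P α l).ncard ≤ u.ncard := by
        have h1 : ((underA P α l).ncard : ℝ) ≤ (u.ncard : ℝ) := by
          push_cast at hcard
          have : ((v.ncard : ℝ)) ≤ ((overA P α l).ncard : ℝ) := by exact_mod_cast hcv
          linarith
        exact_mod_cast h1
      have hcv' : (overA P α l).ncard ≤ v.ncard := by
        have h1 : ((overA P α l).ncard : ℝ) ≤ (v.ncard : ℝ) := by
          push_cast at hcard
          have : ((u.ncard : ℝ)) ≤ ((underA P α l).ncard : ℝ) := by exact_mod_cast hcu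
          linarith
        exact_mod_cast h1
      have hu' : u = underA P α l := Set.eq_of_subset_of_ncard_le hu hcu' (Set.toFinite _)
      have hv' : v = overA P α l := Set.eq_of_subset_of_ncard_le hv hcv' (Set.toFinite _)
      rw [hu', hv'] at hξ
      exact hξ
    · intro ξ hξ
      simp only [locAt, Set.mem_iUnion]
      exact ⟨underA P α l, overA P α l, Set.Subset.rfl, Set.Subset.rfl, by
        rw [Set.ncard_union_eq (hdisj l) (Set.toFinite _) (Set.toFinite _)]
        push_cast
        linarith, hξ⟩
  have hlocSM : ∀ l : Fin L, {ξ : Fin L → ℝ | StrictMono ξ} ⊆ locAt P α 0 l := by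
    intro l
    rw [hloc l]
    intro ξ hξ
    constructor
    · simp only [Set.mem_iInter]
      intro l' hl'
      rw [hunder l] at hl'
      exact hξ hl'
    · simp only [Set.mem_iInter]
      intro l' hl'
      rw [hover l] at hl'
      exact hξ hl'
  have hG : GsetI P α 0 γ = Set.univ := by
    ext l
    simp only [GsetI, Set.mem_setOf_eq, Set.mem_univ, iff_true]
    have h1 : (1:ℝ) - δ ≤ (P (locAt P α 0 l)).toReal :=
      le_trans hconc.le (ENNReal.toReal_mono (hfin _) (measure_mono (hlocSM l)))
    linarith
  have hglob : globG P α 0 γ = {ξ : Fin L → ℝ | StrictMono ξ} := by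
    apply Set.Subset.antisymm
    · intro ξ hξ
      simp only [globG, hG, Set.mem_iInter, Set.mem_univ, forall_true_left] at hξ
      intro a b hab
      have := hξ a
      rw [hloc a] at this
      have h2 := this.2
      simp only [Set.mem_iInter] at h2
      have := h2 b (by rw [hover a]; exact hab)
      exact this
    · intro ξ hξ
      simp only [globG, Set.mem_iInter]
      intro l _
      exact hlocSM l hξ
  refine ⟨hG, hglob, ?_⟩
  rw [hglob]
  exact hconc
end

section
/- (Deterministic form of Proposition 3.1.) Let L ≥ 2, let ξ⋆ : Fin L → ℝ be strictly increasing, and let (P_N) be a sequence of probability measures on Ω such that for every ε > 0, P_N({ξ ∈ Ω : |ξ(l) − ξ⋆(l)| ≤ ε for all l}) → 1 as N → ∞. Then for every 0 < α ≤ 1/2 and 0 < γ ≤ 1, there exists N₀ such that for all N ≥ N₀, the global statement constructed from P_N with local error zero satisfies G_N(α,0,γ) = {ξ ∈ Ω : ξ is strictly increasing}; moreover P_N(G_N(α,0,γ)) → 1 as N → ∞. (Thus in the large-data limit the global statement asserts the true ordering ξ_1 ≺ ⋯ ≺ ξ_L with posterior probability tending to one.) -/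
open MeasureTheory Set

lemma elem_meas {L : ℕ} (l l' : Fin L) : MeasurableSet (Elem L l l') :=
  measurableSet_lt (measurable_pi_apply l') (measurable_pi_apply l)

lemma elem_add_le {L : ℕ} (Q : Measure (Fin L → ℝ)) [IsProbabilityMeasure Q] (l l' : Fin L) :
    (Q (Elem L l l')).toReal + (Q (Elem L l' l)).toReal ≤ 1 := by
  have hd : Disjoint (Elem L l l') (Elem L l' l) := by
    rw [Set.disjoint_left]
    intro ξ h1 h2
    exact absurd (lt_trans h1 h2) (lt_irrefl (ξ l'))
  have hu : Q (Elem L l l') + Q (Elem L l' l) ≤ 1 := by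
    rw [← measure_union hd (elem_meas l' l)]
    exact prob_le_one
  have := ENNReal.toReal_mono (by norm_num) hu
  rwa [ENNReal.toReal_add (measure_ne_top Q _) (measure_ne_top Q _), ENNReal.toReal_one] at this

lemma elem_prob_iff {L : ℕ} (Q : Measure (Fin L → ℝ)) [IsProbabilityMeasure Q] {α : ℝ}
    (hα2 : α ≤ 1/2) {B : Set (Fin L → ℝ)} (hBmono : ∀ ξ ∈ B, StrictMono ξ)
    (hQB : 1 - α < (Q B).toReal) (a b : Fin L) :
    1 - α < (Q (Elem L a b)).toReal ↔ b < a := by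
  constructor
  · intro h
    by_contra hlt
    push_neg at hlt
    rcases eq_or_lt_of_le hlt with he | hl
    · subst he
      have he0 : Elem L a a = ∅ := by
        ext ξ; simp [_root_.Elem]
      rw [he0] at h
      simp at h
      linarith
    · have hsub : B ⊆ Elem L b a := fun ξ hξ => hBmono ξ hξ hl
      have h2 : 1 - α < (Q (Elem L b a)).toReal :=
        lt_of_lt_of_le hQB (ENNReal.toReal_mono (measure_ne_top Q _) (measure_mono hsub))
      have h3 := elem_add_le Q a b
      linarith
  · intro h
    have hsub : B ⊆ Elem L a b := fun ξ hξ => hBmono ξ hξ h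
    exact lt_of_lt_of_le hQB (ENNReal.toReal_mono (measure_ne_top Q _) (measure_mono hsub))

lemma sub_eq {β : Type*} [Finite β] {u v U V : Set β} (hu : u ⊆ U) (hv : v ⊆ V)
    (hUV : Disjoint U V) (hc : ((U ∪ V).ncard : ℝ) ≤ (u.ncard : ℝ) + (v.ncard : ℝ)) :
    u = U ∧ v = V := by
  have huv : Disjoint u v := hUV.mono hu hv
  have h1 : (u ∪ v).ncard = u.ncard + v.ncard :=
    Set.ncard_union_eq huv (Set.toFinite u) (Set.toFinite v)
  have hc' : (U ∪ V).ncard ≤ u.ncard + v.ncard := by exact_mod_cast hc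
  have heq : u ∪ v = U ∪ V :=
    Set.eq_of_subset_of_ncard_le (Set.union_subset_union hu hv) (by omega) (Set.toFinite _)
  have hU : U ⊆ u := by
    intro x hx
    have hx2 : x ∈ u ∪ v := by rw [heq]; exact Set.mem_union_left V hx
    rcases hx2 with h | h
    · exact h
    · exact absurd (hv h) (Set.disjoint_left.mp hUV hx)
  have hV : V ⊆ v := by
    intro x hx
    have hx2 : x ∈ u ∪ v := by rw [heq]; exact Set.mem_union_right U hx
    rcases hx2 with h | h
    · exact absurd (hu h) (Set.disjoint_right.mp hUV hx)
    · exact h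
  exact ⟨subset_antisymm hu hU, subset_antisymm hv hV⟩


lemma key_globG {L : ℕ} (Q : Measure (Fin L → ℝ)) [IsProbabilityMeasure Q]
    {α γ : ℝ} (hα2 : α ≤ 1/2) {B : Set (Fin L → ℝ)} (hBmono : ∀ ξ ∈ B, StrictMono ξ)
    (hQBα : 1 - α < (Q B).toReal) (hQBγ : 1 - γ ≤ (Q B).toReal) :
    globG Q α 0 γ = {ξ : Fin L → ℝ | StrictMono ξ} := by
  have hunder : ∀ l : Fin L, underA Q α l = {l' | l' < l} := by
    intro l; ext l'
    exact elem_prob_iff Q hα2 hBmono hQBα l l'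
  have hover : ∀ l : Fin L, overA Q α l = {l' | l < l'} := by
    intro l; ext l'
    exact elem_prob_iff Q hα2 hBmono hQBα l' l
  have hdisj : ∀ l : Fin L, Disjoint (underA Q α l) (overA Q α l) := by
    intro l
    rw [hunder, hover, Set.disjoint_left]
    intro x h1 h2
    simp only [Set.mem_setOf_eq] at h1 h2
    exact absurd (lt_trans h1 h2) (lt_irrefl x)
  -- B is contained in every locA
  have hsm_locA : ∀ l : Fin L, {ξ : Fin L → ℝ | StrictMono ξ} ⊆ locA Q α l := by
    intro l ξ hξ
    constructor
    · refine Set.mem_iInter₂.mpr fun l' hl' => ?_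
      rw [hunder] at hl'
      exact hξ hl'
    · refine Set.mem_iInter₂.mpr fun l' hl' => ?_
      rw [hover] at hl'
      exact hξ hl'
  -- locAt at t = 0 equals locA
  have hAt : ∀ l : Fin L, locAt Q α 0 l = locA Q α l := by
    intro l
    apply subset_antisymm
    · simp only [locAt, Set.iUnion_subset_iff]
      intro u v hu hv hc
      obtain ⟨h1, h2⟩ := sub_eq hu hv (hdisj l) (by simpa using hc)
      rw [h1, h2]
      exact subset_rfl
    · intro ξ hξ
      simp only [locAt, Set.mem_iUnion]
      refine ⟨underA Q α l, overA Q α l, subset_rfl, subset_rfl, ?_, hξ⟩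
      rw [Set.ncard_union_eq (hdisj l) (Set.toFinite _) (Set.toFinite _)]
      push_cast
      ring_nf
      exact le_refl _
  -- B ⊆ locA, so GsetI is everything
  have hBlocA : ∀ l : Fin L, B ⊆ locA Q α l := fun l ξ hξ => hsm_locA l (hBmono ξ hξ)
  have hGsetI : GsetI Q α 0 γ = Set.univ := by
    ext l
    simp only [GsetI, Set.mem_setOf_eq, Set.mem_univ, iff_true]
    rw [hAt]
    exact le_trans hQBγ (ENNReal.toReal_mono (measure_ne_top Q _) (measure_mono (hBlocA l)))
  -- conclude
  rw [globG, hGsetI]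
  apply subset_antisymm
  · intro ξ hξ
    intro a b hab
    have h1 : ξ ∈ locAt Q α 0 b := by
      simpa using Set.mem_iInter₂.mp hξ b (Set.mem_univ b)
    rw [hAt] at h1
    have := Set.mem_iInter₂.mp h1.1 a (by rw [hunder]; exact hab)
    exact this
  · intro ξ hξ
    refine Set.mem_iInter₂.mpr fun l _ => ?_
    rw [hAt]
    exact hsm_locA l hξ


lemma exists_eps {L : ℕ} (hL : 2 ≤ L) (ξs : Fin L → ℝ) (hmono : StrictMono ξs) :
    ∃ ε : ℝ, 0 < ε ∧ ∀ ξ : Fin L → ℝ, (∀ l, |ξ l - ξs l| ≤ ε) → StrictMono ξ := by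
  have hpair : (Finset.univ.filter (fun p : Fin L × Fin L => p.1 < p.2)).Nonempty := by
    refine ⟨(⟨0, by omega⟩, ⟨1, by omega⟩), ?_⟩
    rw [Finset.mem_filter]
    exact ⟨Finset.mem_univ _, Fin.mk_lt_mk.mpr Nat.zero_lt_one⟩
  set S := Finset.univ.filter (fun p : Fin L × Fin L => p.1 < p.2) with hS
  refine ⟨(S.inf' hpair fun p => ξs p.2 - ξs p.1) / 3, ?_, ?_⟩
  · have : 0 < S.inf' hpair fun p => ξs p.2 - ξs p.1 := by
      rw [Finset.lt_inf'_iff]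
      intro p hp
      rw [hS, Finset.mem_filter] at hp
      have := hmono hp.2
      linarith
    linarith
  · intro ξ hξ a b hab
    have hmem : (a, b) ∈ S := by
      rw [hS, Finset.mem_filter]
      exact ⟨Finset.mem_univ _, hab⟩
    have h1 : (S.inf' hpair fun p => ξs p.2 - ξs p.1) ≤ ξs b - ξs a :=
      Finset.inf'_le _ hmem
    have h2 := abs_le.mp (hξ a)
    have h3 := abs_le.mp (hξ b)
    have hpos : 0 < S.inf' hpair fun p => ξs p.2 - ξs p.1 := by
      rw [Finset.lt_inf'_iff]
      intro p hp
      rw [hS, Finset.mem_filter] at hp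
      have := hmono hp.2
      linarith
    set m := S.inf' hpair fun p => ξs p.2 - ξs p.1
    have : ξ a ≤ ξs a + m / 3 := by linarith [h2.2]
    have : ξs b - m / 3 ≤ ξ b := by linarith [h3.1]
    linarith


theorem stmt_17 (L : ℕ) (hL : 2 ≤ L) (ξs : Fin L → ℝ) (hmono : StrictMono ξs)
    (P : ℕ → Measure (Fin L → ℝ)) (hP : ∀ N, IsProbabilityMeasure (P N))
    (hconc : ∀ ε : ℝ, 0 < ε →
      Filter.Tendsto (fun N => ((P N) {ξ : Fin L → ℝ | ∀ l : Fin L, |ξ l - ξs l| ≤ ε}).toReal)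
        Filter.atTop (nhds 1)) :
    ∀ α γ : ℝ, 0 < α → α ≤ 1 / 2 → 0 < γ → γ ≤ 1 →
      (∃ N₀ : ℕ, ∀ N ≥ N₀, globG (P N) α 0 γ = {ξ : Fin L → ℝ | StrictMono ξ}) ∧
      Filter.Tendsto (fun N => ((P N) (globG (P N) α 0 γ)).toReal) Filter.atTop (nhds 1) := by
  intro α γ hα hα2 hγ hγ1
  obtain ⟨ε, hε, hball⟩ := exists_eps hL ξs hmono
  set B := {ξ : Fin L → ℝ | ∀ l, |ξ l - ξs l| ≤ ε} with hBdef
  have hc : 1 - min α γ < 1 := by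
    have : 0 < min α γ := lt_min hα hγ
    linarith
  have hev : ∀ᶠ N in Filter.atTop, 1 - min α γ < ((P N) B).toReal :=
    (hconc ε hε).eventually (eventually_gt_nhds hc)
  obtain ⟨N₀, hN₀⟩ := Filter.eventually_atTop.mp hev
  have hkey : ∀ N ≥ N₀, globG (P N) α 0 γ = {ξ : Fin L → ℝ | StrictMono ξ} := by
    intro N hN
    haveI := hP N
    refine key_globG (P N) hα2 hball ?_ ?_
    · exact lt_of_le_of_lt (by linarith [min_le_left α γ]) (hN₀ N hN)
    · exact le_of_lt (lt_of_le_of_lt (by linarith [min_le_right α γ]) (hN₀ N hN))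
  refine ⟨⟨N₀, hkey⟩, ?_⟩
  apply tendsto_of_tendsto_of_tendsto_of_le_of_le' (hconc ε hε) tendsto_const_nhds
  · filter_upwards [Filter.eventually_ge_atTop N₀] with N hN
    have hsub : B ⊆ globG (P N) α 0 γ := by
      rw [hkey N hN]
      exact fun ξ hξ => hball ξ hξ
    haveI := hP N
    exact ENNReal.toReal_mono (measure_ne_top _ _) (measure_mono hsub)
  · filter_upwards with N
    haveI := hP N
    have h1 : (P N) (globG (P N) α 0 γ) ≤ 1 := prob_le_one
    have := ENNReal.toReal_mono (by norm_num) h1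
    simpa using this
end
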